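/- The goodness-of-fit test is consistent against every stationary ergodic alternative: for every α ∈ (0,1) and every stationary ergodic ρ' ≠ ρ, with ρ'-probability 1 the test Gₙ^α rejects (outputs 1) for all sufficiently large n. -/

import Mathlib

open MeasureTheory Filter Topology

/-- Empirical sliding-window frequency of the (cylinder) set `S` of dimension `l`
in the sample given by the first `n` values of `X`. -/
noncomputable def nu (n : ℕ) (X : ℕ → ℝ) (l : ℕ) (S : Set (ℕ → ℝ)) : ℝ :=
  if l ≤ n ∧ 1 ≤ l then
    (∑ i ∈ Finset.range (n - l + 1),
      S.indicator (fun _ => (1 : ℝ)) (fun j => X (i + j))) / (n - l + 1)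
  else 0

/-- A finite-dimensional cylinder with rational endpoints. -/
structure Cylinder where
  dim : ℕ
  dimPos : 0 < dim
  a : Fin dim → ℚ
  b : Fin dim → ℚ

/-- The subset of `ℕ → ℝ` determined by a cylinder (it constrains the first `dim`
coordinates to lie in the corresponding rational-endpoint intervals). -/
def Cylinder.set (C : Cylinder) : Set (ℕ → ℝ) :=
  {x | ∀ j : Fin C.dim, (C.a j : ℝ) ≤ x j.val ∧ x j.val ≤ (C.b j : ℝ)}

/-- Distributional distance between two process measures. -/
noncomputable def dd (w : ℕ → ℝ) (B : ℕ → Cylinder) (μ ν : Measure (ℕ → ℝ)) : ℝ :=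
  ∑' i, w i * |(μ (B i).set).toReal - (ν (B i).set).toReal|

/-- Empirical distributional distance between two finite samples. -/
noncomputable def dhat (w : ℕ → ℝ) (B : ℕ → Cylinder)
    (n : ℕ) (X : ℕ → ℝ) (m : ℕ) (Y : ℕ → ℝ) : ℝ :=
  ∑' i, w i * |nu n X (B i).dim (B i).set - nu m Y (B i).dim (B i).set|

/-- One-sample empirical distributional distance to a known process measure. -/
noncomputable def dhat1 (w : ℕ → ℝ) (B : ℕ → Cylinder)
    (n : ℕ) (X : ℕ → ℝ) (ρ : Measure (ℕ → ℝ)) : ℝ :=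
  ∑' i, w i * |nu n X (B i).dim (B i).set - (ρ (B i).set).toReal|

/-- The left shift on `ℕ → ℝ`. -/
def shift : (ℕ → ℝ) → (ℕ → ℝ) := fun x n => x (n + 1)

/-- Concatenation of a word of length `k` with another word. -/
def conc (k : ℕ) (x y : ℕ → ℝ) : ℕ → ℝ := fun i => if i < k then x i else y (i - k)

section Maximal
variable {α : Type*} [MeasurableSpace α] {μ : Measure α} {f : α → α} {g : α → ℝ}

noncomputable def maxSum (f : α → α) (g : α → ℝ) : ℕ → α → ℝ
  | 0 => fun _ => 0
  | (n+1) => fun x => max (maxSum f g n x) (birkhoffSum f g (n+1) x)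

lemma maxSum_nonneg (n : ℕ) (x : α) : 0 ≤ maxSum f g n x := by
  induction n with
  | zero => simp [maxSum]
  | succ n ih => exact le_trans ih (le_max_left _ _)

lemma maxSum_mono {m n : ℕ} (h : m ≤ n) (x : α) : maxSum f g m x ≤ maxSum f g n x := by
  induction n with
  | zero => simp_all
  | succ n ih =>
    rcases Nat.lt_or_ge m (n+1) with h'|h'
    · exact le_trans (ih (Nat.lt_succ_iff.mp h')) (le_max_left _ _)
    · have : m = n + 1 := le_antisymm h h'
      simp [this]

lemma birkhoffSum_le_maxSum {k n : ℕ} (h : k ≤ n) (x : α) :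
    birkhoffSum f g k x ≤ maxSum f g n x := by
  cases k with
  | zero => simpa [birkhoffSum] using maxSum_nonneg n x
  | succ k =>
    calc birkhoffSum f g (k+1) x ≤ maxSum f g (k+1) x := le_max_right _ _
    _ ≤ maxSum f g n x := maxSum_mono h x

lemma maxSum_key (n : ℕ) (x : α) :
    maxSum f g n x ≤ max (g x + maxSum f g n (f x)) 0 := by
  induction n with
  | zero => simp [maxSum]
  | succ n ih =>
    refine max_le ?_ ?_
    · exact le_trans ih (max_le_max (by gcongr; exact maxSum_mono n.le_succ (f x)) le_rfl)
    · rw [birkhoffSum_succ' f g n x]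
      exact le_max_of_le_left (by gcongr; exact birkhoffSum_le_maxSum n.le_succ (f x))

lemma measurable_birkhoffSum (hf : Measurable f) (hg : Measurable g) (n : ℕ) :
    Measurable (birkhoffSum f g n) := by
  apply Finset.measurable_sum
  exact fun i _ => hg.comp (hf.iterate i)

lemma measurable_maxSum (hf : Measurable f) (hg : Measurable g) (n : ℕ) :
    Measurable (maxSum f g n) := by
  induction n with
  | zero => exact measurable_const
  | succ n ih => exact Measurable.max ih (measurable_birkhoffSum hf hg (n+1))

lemma integrable_birkhoffSum (hf : MeasurePreserving f μ μ) (hg : Integrable g μ) (n : ℕ) :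
    Integrable (birkhoffSum f g n) μ := by
  apply integrable_finset_sum
  intro i _
  exact (hf.iterate i).integrable_comp hg.aestronglyMeasurable |>.mpr hg

lemma integrable_maxSum (hf : MeasurePreserving f μ μ) (hg : Integrable g μ) (n : ℕ) :
    Integrable (maxSum f g n) μ := by
  induction n with
  | zero => simpa [maxSum] using integrable_const (0:ℝ)
  | succ n ih =>
    have h := ih.sup (integrable_birkhoffSum hf hg (n+1))
    have : maxSum f g (n+1) = (maxSum f g n ⊔ birkhoffSum f g (n+1)) := by
      funext x; simp [maxSum, Pi.sup_apply]
    rw [this]; exact h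

/-- Maximal ergodic lemma. -/
lemma maximal_ergodic (hf : MeasurePreserving f μ μ) (hfm : Measurable f)
    (hgm : Measurable g) (hgi : Integrable g μ) (n : ℕ) :
    0 ≤ ∫ x, Set.indicator {y | 0 < maxSum f g n y} g x ∂μ := by
  set E : Set α := {y | 0 < maxSum f g n y} with hE
  have hEm : MeasurableSet E := measurableSet_lt measurable_const (measurable_maxSum hfm hgm n)
  have hptwise : ∀ x, maxSum f g n x - maxSum f g n (f x) ≤ Set.indicator E g x := by
    intro x
    by_cases hx : x ∈ E
    · rw [Set.indicator_of_mem hx]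
      have := maxSum_key (f := f) (g := g) n x
      rcases le_max_iff.mp this with h | h
      · linarith
      · exact absurd (lt_of_lt_of_le hx h) (lt_irrefl 0)
    · rw [Set.indicator_of_notMem hx]
      have h0 : maxSum f g n x = 0 :=
        le_antisymm (not_lt.mp hx) (maxSum_nonneg n x)
      have := maxSum_nonneg (f := f) (g := g) n (f x)
      linarith
  have hMi : Integrable (maxSum f g n) μ := integrable_maxSum hf hgi n
  have hMfi : Integrable (fun x => maxSum f g n (f x)) μ :=
    (hf.integrable_comp hMi.aestronglyMeasurable).mpr hMi
  have hIi : Integrable (Set.indicator E g) μ := hgi.indicator hEm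
  have h1 : ∫ x, (maxSum f g n x - maxSum f g n (f x)) ∂μ
      ≤ ∫ x, Set.indicator E g x ∂μ :=
    integral_mono (hMi.sub hMfi) hIi hptwise
  have h2 : ∫ x, maxSum f g n (f x) ∂μ = ∫ x, maxSum f g n x ∂μ := by
    conv_rhs => rw [← hf.map_eq]
    exact (integral_map hfm.aemeasurable
      ((measurable_maxSum hfm hgm n).aestronglyMeasurable)).symm
  rw [integral_sub hMi hMfi, h2, sub_self] at h1
  exact h1

end Maximal

section PointwiseErgodic
variable {α : Type*} [MeasurableSpace α] {μ : Measure α} {f : α → α} {g : α → ℝ}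

lemma measurable_birkhoffAverage (hf : Measurable f) (hg : Measurable g) (n : ℕ) :
    Measurable (fun x => birkhoffAverage ℝ f g n x) := by
  exact (measurable_birkhoffSum hf hg n).const_smul ((n:ℝ)⁻¹)

lemma integrable_of_bounded [IsProbabilityMeasure μ] (hgm : Measurable g) {C : ℝ}
    (hC : ∀ x, |g x| ≤ C) : Integrable g μ :=
  (integrable_const C).mono' hgm.aestronglyMeasurable (ae_of_all _ fun x => by
    simpa using hC x)

lemma birkhoffAverage_shift_diff {C : ℝ} (hC : ∀ x, |g x| ≤ C) (n : ℕ) (x : α) :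
    |birkhoffAverage ℝ f g n (f x) - birkhoffAverage ℝ f g n x| ≤ 2 * C / n := by
  rcases Nat.eq_zero_or_pos n with rfl | hn
  · simp [birkhoffAverage]
  · have h1 : birkhoffAverage ℝ f g n (f x) - birkhoffAverage ℝ f g n x
        = (n:ℝ)⁻¹ * (g (f^[n] x) - g x) := by
      simp only [birkhoffAverage, smul_eq_mul]
      rw [← mul_sub, birkhoffSum_apply_sub_birkhoffSum]
    rw [h1, abs_mul, abs_inv, Nat.abs_cast]
    have h2C : |g (f^[n] x) - g x| ≤ 2 * C := by
      calc |g (f^[n] x) - g x| ≤ |g (f^[n] x)| + |g x| := abs_sub _ _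
      _ ≤ 2 * C := by have := hC (f^[n] x); have := hC x; linarith
    have hn' : (0:ℝ) < n := by exact_mod_cast hn
    have := mul_le_mul_of_nonneg_left h2C (inv_nonneg.mpr hn'.le)
    have heq : 2 * C / (n:ℝ) = (n:ℝ)⁻¹ * (2 * C) := by field_simp
    linarith

/-- One-sided pointwise ergodic bound. -/
lemma ergodic_eventually_lt (hf : Ergodic f μ) [IsProbabilityMeasure μ]
    (hgm : Measurable g) {C : ℝ} (hC : ∀ x, |g x| ≤ C) {ε : ℝ} (hε : 0 < ε) :
    ∀ᵐ x ∂μ, ∀ᶠ n in atTop, birkhoffAverage ℝ f g n x < ∫ x, g x ∂μ + ε := by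
  have hfm : Measurable f := hf.toMeasurePreserving.measurable
  have hgi : Integrable g μ := integrable_of_bounded hgm hC
  set A : ℕ → α → ℝ := fun n x => birkhoffAverage ℝ f g n x with hA
  set c : ℝ := ∫ x, g x ∂μ + ε with hc
  set H : Set α := {x | ∀ k : ℕ, ∃ᶠ n in atTop, c - 1/(k+1) ≤ A n x} with hH
  -- measurability of H
  have hHm : MeasurableSet H := by
    have : H = ⋂ k : ℕ, ⋂ N : ℕ, ⋃ n : ℕ, ⋃ _ : N ≤ n, {x | c - 1/(k+1) ≤ A n x} := by
      ext x
      simp only [hH, Set.mem_setOf_eq, Set.mem_iInter, Set.mem_iUnion, frequently_atTop]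
      exact ⟨fun h k N => by obtain ⟨n, hn, h'⟩ := h k N; exact ⟨n, hn, h'⟩,
        fun h k N => by obtain ⟨n, hn, h'⟩ := h k N; exact ⟨n, hn, h'⟩⟩
    rw [this]
    exact MeasurableSet.iInter fun k => MeasurableSet.iInter fun N =>
      MeasurableSet.iUnion fun n => MeasurableSet.iUnion fun _ =>
        measurableSet_le measurable_const (measurable_birkhoffAverage hfm hgm n)
  -- key frequently-transfer estimate
  have keydiff : ∀ (x : α) (k : ℕ) (y z : α), (∀ n, |A n y - A n z| ≤ 2*C/n) →
      (∀ k' : ℕ, ∃ᶠ n in atTop, c - 1/(k'+1) ≤ A n z) →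
      ∃ᶠ n in atTop, c - 1/(k+1) ≤ A n y := by
    intro x k y z hdiff hz
    have hfreq := hz (2*k+1)
    have hev : ∀ᶠ n : ℕ in atTop, 2*C/n ≤ 1/(2*(k+1)) := by
      have h0 : (0:ℝ) < 1/(2*(k+1)) := by positivity
      exact (tendsto_const_div_atTop_nhds_zero_nat (2*C)).eventually (eventually_le_nhds h0)
    refine (hfreq.and_eventually hev).mono ?_
    rintro n ⟨h1, h2⟩
    have h3 : |A n y - A n z| ≤ 2*C/n := hdiff n
    have h4 : A n y ≥ A n z - 2*C/n := by
      have := abs_le.mp h3; linarith [this.1]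
    have hcast : ((2*k+1:ℕ):ℝ) + 1 = 2*((k:ℝ)+1) := by push_cast; ring
    rw [hcast] at h1
    have hk0 : ((k:ℝ)+1) ≠ 0 := by positivity
    have h6 : (1:ℝ)/(2*((k:ℝ)+1)) + 1/(2*((k:ℝ)+1)) = 1/((k:ℝ)+1) := by
      field_simp
      norm_num
    linarith
  -- invariance of H
  have hinv : f ⁻¹' H = H := by
    ext x
    simp only [Set.mem_preimage, hH, Set.mem_setOf_eq]
    constructor
    · intro h k
      refine keydiff x k x (f x) (fun n => ?_) h
      have := birkhoffAverage_shift_diff (f := f) hC n x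
      rwa [abs_sub_comm]
    · intro h k
      exact keydiff x k (f x) x (fun n => birkhoffAverage_shift_diff hC n x) h
  rcases hf.toPreErgodic.ae_empty_or_univ hHm hinv with h | h
  · -- H is null: a.e. eventually A n x < c
    filter_upwards [Filter.eventuallyEq_set.mp h] with x hx
    have hx' : x ∉ H := fun hmem => (hx.mp hmem).elim
    rw [hH, Set.mem_setOf_eq] at hx'
    push_neg at hx'
    obtain ⟨k, hk⟩ := hx'
    filter_upwards [hk] with n hn
    have hpos : (0:ℝ) < 1/((k:ℝ)+1) := by positivity
    have := hn
    rw [hc] at this ⊢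
    linarith
  · -- H is conull: contradiction
    exfalso
    set b : ℝ := ∫ x, g x ∂μ + ε/2 with hb
    set h' : α → ℝ := fun x => g x - b with hh'
    have hh'm : Measurable h' := hgm.sub measurable_const
    have hh'b : ∀ x, |h' x| ≤ C + |b| := fun x => by
      have := hC x
      calc |h' x| ≤ |g x| + |b| := abs_sub _ _
      _ ≤ C + |b| := by linarith
    have hh'i : Integrable h' μ := integrable_of_bounded hh'm hh'b
    have hinth' : ∫ x, h' x ∂μ = -(ε/2) := by
      rw [hh']
      rw [integral_sub hgi (integrable_const b), integral_const]
      simp [hb]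
    -- a.e. x lies in the union of the maximal sets for h'
    set E : ℕ → Set α := fun n => {y | 0 < maxSum f h' n y} with hE
    have hEmono : Monotone E := fun m n hmn x hx =>
      lt_of_lt_of_le hx (maxSum_mono hmn x)
    have hEmeas : ∀ n, MeasurableSet (E n) := fun n =>
      measurableSet_lt measurable_const (measurable_maxSum hfm hh'm n)
    have hunion : ∀ᵐ x ∂μ, x ∈ ⋃ n, E n := by
      filter_upwards [Filter.eventuallyEq_set.mp h] with x hx
      have hxH : x ∈ H := hx.mpr (Set.mem_univ x)
      rw [hH, Set.mem_setOf_eq] at hxH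
      obtain ⟨k, hk⟩ := exists_nat_one_div_lt (half_pos hε)
      have hfreq := (hxH k).and_eventually (eventually_ge_atTop 1)
      obtain ⟨n, hn1, hn2⟩ := hfreq.exists
      have hnpos : (0:ℝ) < n := by exact_mod_cast hn2
      -- birkhoffSum of h' at n is positive
      have hsum : birkhoffSum f h' n x = birkhoffSum f g n x - n * b := by
        simp only [hh', birkhoffSum, Finset.sum_sub_distrib, Finset.sum_const,
          Finset.card_range, nsmul_eq_mul]
      have hAS : birkhoffSum f g n x = n * A n x := by
        simp only [hA, birkhoffAverage, smul_eq_mul]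
        field_simp
      have hAn : b < A n x := by
        have : c - 1/((k:ℝ)+1) ≤ A n x := hn1
        rw [hc] at this; rw [hb]
        linarith
      have hpos : 0 < birkhoffSum f h' n x := by
        rw [hsum, hAS]
        have := mul_lt_mul_of_pos_left hAn hnpos
        linarith
      exact Set.mem_iUnion.mpr ⟨n, lt_of_lt_of_le hpos (birkhoffSum_le_maxSum le_rfl x)⟩
    -- dominated convergence
    set F : ℕ → α → ℝ := fun n => Set.indicator (E n) h' with hF
    have hFle : ∀ n x, |F n x| ≤ C + |b| := by
      intro n x
      by_cases hx : x ∈ E n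
      · rw [hF]; simp only [Set.indicator_of_mem hx]; exact hh'b x
      · rw [hF]; simp only [Set.indicator_of_notMem hx, abs_zero]
        calc (0:ℝ) ≤ |h' x| := abs_nonneg _
        _ ≤ C + |b| := hh'b x
    have hFtends : ∀ x, Tendsto (fun n => F n x) atTop (𝓝 (Set.indicator (⋃ n, E n) h' x)) := by
      intro x
      by_cases hx : x ∈ ⋃ n, E n
      · obtain ⟨n₀, hn₀⟩ := Set.mem_iUnion.mp hx
        rw [Set.indicator_of_mem hx]
        apply tendsto_const_nhds.congr'
        filter_upwards [eventually_ge_atTop n₀] with n hn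
        exact (Set.indicator_of_mem (hEmono hn hn₀) h').symm
      · have hxn : ∀ n, x ∉ E n := fun n hn => hx (Set.mem_iUnion.mpr ⟨n, hn⟩)
        rw [Set.indicator_of_notMem hx]
        apply tendsto_const_nhds.congr
        exact fun n => (Set.indicator_of_notMem (hxn n) h').symm
    have hlim : Tendsto (fun n => ∫ x, F n x ∂μ) atTop (𝓝 (∫ x, Set.indicator (⋃ n, E n) h' x ∂μ)) := by
      apply tendsto_integral_of_dominated_convergence (fun _ => C + |b|)
      · exact fun n => ((hh'm.indicator (hEmeas n)).aestronglyMeasurable)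
      · exact integrable_const _
      · exact fun n => ae_of_all _ fun x => by simpa using hFle n x
      · exact ae_of_all _ hFtends
    have hcongr : ∫ x, Set.indicator (⋃ n, E n) h' x ∂μ = ∫ x, h' x ∂μ := by
      apply integral_congr_ae
      filter_upwards [hunion] with x hx
      exact Set.indicator_of_mem hx h'
    rw [hcongr, hinth'] at hlim
    have hge : (0:ℝ) ≤ -(ε/2) :=
      ge_of_tendsto' hlim fun n => maximal_ergodic hf.toMeasurePreserving hfm hh'm hh'i n
    linarith
end PointwiseErgodic

section PW2
variable {α : Type*} [MeasurableSpace α] {μ : Measure α} {f : α → α} {g : α → ℝ}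

/-- Pointwise (Birkhoff) ergodic theorem for bounded measurable functions. -/
theorem ergodic_birkhoffAverage_ae_tendsto (hf : Ergodic f μ) [IsProbabilityMeasure μ]
    (hgm : Measurable g) {C : ℝ} (hC : ∀ x, |g x| ≤ C) :
    ∀ᵐ x ∂μ, Tendsto (fun n => birkhoffAverage ℝ f g n x) atTop (𝓝 (∫ x, g x ∂μ)) := by
  have hneg : ∀ x, |(-g) x| ≤ C := fun x => by simpa using hC x
  have hupper : ∀ᵐ x ∂μ, ∀ m : ℕ, ∀ᶠ n in atTop,
      birkhoffAverage ℝ f g n x < ∫ x, g x ∂μ + 1/(m+1) := by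
    rw [ae_all_iff]
    intro m
    exact ergodic_eventually_lt hf hgm hC (by positivity)
  have hlower : ∀ᵐ x ∂μ, ∀ m : ℕ, ∀ᶠ n in atTop,
      ∫ x, g x ∂μ - 1/(m+1) < birkhoffAverage ℝ f g n x := by
    rw [ae_all_iff]
    intro m
    have h := ergodic_eventually_lt hf hgm.neg hneg
      (ε := 1/(m+1)) (by positivity)
    filter_upwards [h] with x hx
    filter_upwards [hx] with n hn
    have h1 : birkhoffAverage ℝ f (fun y => -g y) n x = -birkhoffAverage ℝ f g n x := by
      simp only [birkhoffAverage, birkhoffSum, Finset.sum_neg_distrib, smul_neg]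
    have h2 : ∫ x, -g x ∂μ = -∫ x, g x ∂μ := integral_neg g
    change birkhoffAverage ℝ f (fun y => -g y) n x < ∫ x, -g x ∂μ + 1/(m+1) at hn
    rw [h1, h2] at hn
    linarith
  filter_upwards [hupper, hlower] with x hu hl
  rw [tendsto_order]
  constructor
  · intro a ha
    obtain ⟨m, hm⟩ := exists_nat_one_div_lt (by linarith : (0:ℝ) < ∫ x, g x ∂μ - a)
    filter_upwards [hl m] with n hn
    linarith
  · intro a ha
    obtain ⟨m, hm⟩ := exists_nat_one_div_lt (by linarith : (0:ℝ) < a - ∫ x, g x ∂μ)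
    filter_upwards [hu m] with n hn
    linarith
end PW2

lemma measurable_shift : Measurable shift :=
  measurable_pi_lambda _ fun n => measurable_pi_apply (n + 1)

lemma shift_iterate (i : ℕ) (X : ℕ → ℝ) : shift^[i] X = fun j => X (j + i) := by
  induction i generalizing X with
  | zero => simp
  | succ i ih =>
    rw [Function.iterate_succ_apply, ih]
    funext j
    simp [shift, Nat.add_assoc]

lemma Cylinder.measurableSet (C : Cylinder) : MeasurableSet C.set := by
  have : C.set = ⋂ j : Fin C.dim, ((fun x : ℕ → ℝ => x j.val) ⁻¹'
      (Set.Icc (C.a j : ℝ) (C.b j : ℝ))) := by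
    ext x; simp [Cylinder.set, Set.mem_Icc]
  rw [this]
  exact MeasurableSet.iInter fun j =>
    (measurable_pi_apply j.val) measurableSet_Icc

lemma indicator_one_abs_le (S : Set (ℕ → ℝ)) (x : ℕ → ℝ) :
    |S.indicator (fun _ => (1:ℝ)) x| ≤ 1 := by
  by_cases hx : x ∈ S <;> simp [Set.indicator_of_mem, Set.indicator_of_notMem, hx]

lemma nu_eq_birkhoffAverage {l n : ℕ} (hl : 1 ≤ l) (hn : l ≤ n) (X : ℕ → ℝ)
    (S : Set (ℕ → ℝ)) :
    nu n X l S = birkhoffAverage ℝ shift (S.indicator fun _ => (1:ℝ)) (n - l + 1) X := by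
  rw [nu, if_pos ⟨hn, hl⟩]
  have hterm : ∀ i : ℕ, S.indicator (fun _ => (1:ℝ)) (fun j => X (i + j))
      = S.indicator (fun _ => (1:ℝ)) (shift^[i] X) := by
    intro i
    rw [shift_iterate]
    congr 1
    funext j
    rw [Nat.add_comm]
  have hcast : ((n:ℝ) - (l:ℝ) + 1) = ((n - l + 1 : ℕ) : ℝ) := by
    push_cast [hn]; ring
  rw [birkhoffAverage, birkhoffSum]
  rw [Finset.sum_congr rfl (fun i _ => hterm i), hcast, smul_eq_mul, div_eq_inv_mul]

lemma nu_nonneg (n : ℕ) (X : ℕ → ℝ) (l : ℕ) (S : Set (ℕ → ℝ)) : 0 ≤ nu n X l S := by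
  rw [nu]
  split_ifs with h
  · apply div_nonneg
    · exact Finset.sum_nonneg fun i _ => Set.indicator_nonneg (fun _ _ => zero_le_one) _
    · have : (l:ℝ) ≤ (n:ℝ) := by exact_mod_cast h.1
      linarith
  · exact le_rfl

lemma nu_le_one (n : ℕ) (X : ℕ → ℝ) (l : ℕ) (S : Set (ℕ → ℝ)) : nu n X l S ≤ 1 := by
  rw [nu]
  split_ifs with h
  · have hln : (l:ℝ) ≤ (n:ℝ) := by exact_mod_cast h.1
    rw [div_le_one (by linarith)]
    have := Finset.sum_le_card_nsmul (Finset.range (n - l + 1))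
      (fun i => S.indicator (fun _ => (1:ℝ)) (fun j => X (i + j))) 1
      (fun i _ => by
        have := indicator_one_abs_le S (fun j => X (i + j))
        exact (abs_le.mp this).2)
    simp only [Finset.card_range, nsmul_eq_mul, mul_one] at this
    calc (∑ i ∈ Finset.range (n - l + 1), S.indicator (fun _ => (1:ℝ)) fun j => X (i + j))
        ≤ ((n - l + 1 : ℕ) : ℝ) := this
      _ = (n:ℝ) - l + 1 := by push_cast [h.1]; ring
  · exact zero_le_one

section NuTendsto
open Filter

set_option maxHeartbeats 1000000 in
lemma tendsto_nu {μ : Measure (ℕ → ℝ)} [IsProbabilityMeasure μ] (hμ : Ergodic shift μ)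
    (C : Cylinder) :
    ∀ᵐ X ∂μ, Tendsto (fun n => nu n X C.dim C.set) atTop (𝓝 ((μ C.set).toReal)) := by
  set g : (ℕ → ℝ) → ℝ := C.set.indicator (fun _ => (1:ℝ)) with hg
  have hgm : Measurable g := (measurable_const.indicator C.measurableSet)
  have hint : ∫ x, g x ∂μ = (μ C.set).toReal := by
    rw [hg, integral_indicator_const (1:ℝ) C.measurableSet, smul_eq_mul, mul_one]
    rfl
  have := ergodic_birkhoffAverage_ae_tendsto hμ hgm (C := 1) (indicator_one_abs_le C.set)
  rw [hint] at this
  filter_upwards [this] with X hX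
  have hcomp : Tendsto (fun n : ℕ => n - C.dim + 1) atTop atTop := by
    apply tendsto_atTop_atTop.mpr
    intro b
    exact ⟨b + C.dim, fun a ha => by omega⟩
  have h2 := hX.comp hcomp
  apply h2.congr'
  filter_upwards [eventually_ge_atTop C.dim] with n hn
  exact (nu_eq_birkhoffAverage C.dimPos hn X C.set).symm

end NuTendsto

section Dhat
variable {ρ : Measure (ℕ → ℝ)} [IsProbabilityMeasure ρ]

lemma toReal_mem_unit (s : Set (ℕ → ℝ)) : 0 ≤ (ρ s).toReal ∧ (ρ s).toReal ≤ 1 := by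
  constructor
  · exact ENNReal.toReal_nonneg
  · have h1 : ρ s ≤ 1 := prob_le_one
    calc (ρ s).toReal ≤ (1 : ENNReal).toReal :=
      ENNReal.toReal_mono (by norm_num) h1
    _ = 1 := by simp

lemma abs_nu_sub_toReal_le (n : ℕ) (X : ℕ → ℝ) (l : ℕ) (S s : Set (ℕ → ℝ)) :
    |nu n X l S - (ρ s).toReal| ≤ 1 := by
  have h1 := nu_nonneg n X l S
  have h2 := nu_le_one n X l S
  have h3 := toReal_mem_unit (ρ := ρ) s
  rw [abs_le]
  constructor <;> [linarith [h3.2]; linarith [h3.1]]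

lemma dhat1_term_le (w : ℕ → ℝ) (hw : ∀ i, 0 < w i) (B : ℕ → Cylinder)
    (n : ℕ) (X : ℕ → ℝ) (i : ℕ) :
    ‖w i * |nu n X (B i).dim (B i).set - (ρ (B i).set).toReal|‖ ≤ w i := by
  rw [Real.norm_eq_abs, abs_mul, abs_abs, abs_of_pos (hw i)]
  calc w i * |nu n X (B i).dim (B i).set - (ρ (B i).set).toReal| ≤ w i * 1 := by
        exact mul_le_mul_of_nonneg_left (abs_nu_sub_toReal_le _ _ _ _ _) (hw i).le
  _ = w i := mul_one _

lemma summable_dhat1_terms (w : ℕ → ℝ) (hw : ∀ i, 0 < w i) (hsum : Summable w)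
    (B : ℕ → Cylinder) (n : ℕ) (X : ℕ → ℝ) :
    Summable (fun i => w i * |nu n X (B i).dim (B i).set - (ρ (B i).set).toReal|) := by
  apply Summable.of_nonneg_of_le (fun i => mul_nonneg (hw i).le (abs_nonneg _)) (fun i => ?_) hsum
  have := dhat1_term_le (ρ := ρ) w hw B n X i
  rwa [Real.norm_eq_abs, abs_of_nonneg (mul_nonneg (hw i).le (abs_nonneg _))] at this

lemma dhat1_nonneg (w : ℕ → ℝ) (hw : ∀ i, 0 < w i) (B : ℕ → Cylinder)
    (n : ℕ) (X : ℕ → ℝ) : 0 ≤ dhat1 w B n X ρ :=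
  tsum_nonneg fun i => mul_nonneg (hw i).le (abs_nonneg _)

/-- a.s. convergence of the empirical distance to the distributional distance. -/
lemma tendsto_dhat1 {μ : Measure (ℕ → ℝ)} [IsProbabilityMeasure μ]
    (hμ : Ergodic shift μ) (w : ℕ → ℝ) (hw : ∀ i, 0 < w i) (hsum : Summable w)
    (B : ℕ → Cylinder) :
    ∀ᵐ X ∂μ, Tendsto (fun n => dhat1 w B n X ρ) atTop (𝓝 (dd w B μ ρ)) := by
  have h := ae_all_iff.mpr (fun i : ℕ => tendsto_nu hμ (B i))
  filter_upwards [h] with X hX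
  apply tendsto_tsum_of_dominated_convergence hsum
  · intro i
    have : Tendsto (fun n => nu n X (B i).dim (B i).set) atTop
        (𝓝 ((μ (B i).set).toReal)) := hX i
    exact (Tendsto.abs (this.sub tendsto_const_nhds)).const_mul (w i)
  · exact Eventually.of_forall fun n i => dhat1_term_le w hw B n X i

lemma measurable_nu (n l : ℕ) {S : Set (ℕ → ℝ)} (hS : MeasurableSet S) :
    Measurable (fun X : ℕ → ℝ => nu n X l S) := by
  unfold nu
  split_ifs with h
  · apply Measurable.div_const
    apply Finset.measurable_sum
    intro i _
    exact (measurable_const.indicator hS).comp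
      (measurable_pi_lambda _ fun j => measurable_pi_apply (i + j))
  · exact measurable_const

lemma measurable_dhat1 (w : ℕ → ℝ) (hw : ∀ i, 0 < w i) (hsum : Summable w)
    (B : ℕ → Cylinder) (n : ℕ) :
    Measurable (fun X => dhat1 w B n X ρ) := by
  have hpart : ∀ N : ℕ, Measurable (fun X => ∑ i ∈ Finset.range N,
      w i * |nu n X (B i).dim (B i).set - (ρ (B i).set).toReal|) := by
    intro N
    apply Finset.measurable_sum
    intro i _
    exact (((measurable_nu n (B i).dim (B i).measurableSet).sub
      measurable_const).abs).const_mul (w i)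
  apply measurable_of_tendsto_metrizable hpart
  rw [tendsto_pi_nhds]
  intro X
  exact (summable_dhat1_terms w hw hsum B n X).hasSum.tendsto_sum_nat

end Dhat

section PiSystem

lemma Cylinder.mem_set_iff (C : Cylinder) (x : ℕ → ℝ) :
    x ∈ C.set ↔ ∀ j : ℕ, ∀ h : j < C.dim, ((C.a ⟨j,h⟩ : ℝ) ≤ x j ∧ x j ≤ (C.b ⟨j,h⟩ : ℝ)) := by
  constructor
  · intro hx j h
    exact hx ⟨j, h⟩
  · intro hx j
    exact hx j.val j.2

/-- Intersection of two cylinders, as a cylinder. -/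
noncomputable def interCyl (C1 C2 : Cylinder) : Cylinder where
  dim := max C1.dim C2.dim
  dimPos := lt_of_lt_of_le C1.dimPos (le_max_left _ _)
  a := fun j => if h1 : (j:ℕ) < C1.dim then
         (if h2 : (j:ℕ) < C2.dim then max (C1.a ⟨j,h1⟩) (C2.a ⟨j,h2⟩) else C1.a ⟨j,h1⟩)
       else C2.a ⟨j, by have := j.2; omega⟩
  b := fun j => if h1 : (j:ℕ) < C1.dim then
         (if h2 : (j:ℕ) < C2.dim then min (C1.b ⟨j,h1⟩) (C2.b ⟨j,h2⟩) else C1.b ⟨j,h1⟩)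
       else C2.b ⟨j, by have := j.2; omega⟩

lemma interCyl_set (C1 C2 : Cylinder) : (interCyl C1 C2).set = C1.set ∩ C2.set := by
  ext x
  simp only [Set.mem_inter_iff, Cylinder.mem_set_iff, interCyl, Fin.val_mk]
  constructor
  · intro h
    constructor
    · intro j hj1
      have hj : j < max C1.dim C2.dim := lt_of_lt_of_le hj1 (le_max_left _ _)
      have := h j hj
      rw [dif_pos hj1, dif_pos hj1] at this
      by_cases h2 : j < C2.dim
      · rw [dif_pos h2, dif_pos h2] at this
        push_cast at this
        exact ⟨le_trans (le_max_left _ _) this.1, le_trans this.2 (min_le_left _ _)⟩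
      · rw [dif_neg h2, dif_neg h2] at this
        exact this
    · intro j hj2
      have hj : j < max C1.dim C2.dim := lt_of_lt_of_le hj2 (le_max_right _ _)
      have := h j hj
      by_cases h1 : j < C1.dim
      · rw [dif_pos h1, dif_pos h1, dif_pos hj2, dif_pos hj2] at this
        push_cast at this
        exact ⟨le_trans (le_max_right _ _) this.1, le_trans this.2 (min_le_right _ _)⟩
      · rw [dif_neg h1, dif_neg h1] at this
        exact this
  · rintro ⟨h1, h2⟩ j hj
    by_cases hj1 : j < C1.dim
    · rw [dif_pos hj1, dif_pos hj1]
      by_cases hj2 : j < C2.dim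
      · rw [dif_pos hj2, dif_pos hj2]
        have ha := h1 j hj1
        have hb := h2 j hj2
        push_cast
        exact ⟨max_le ha.1 hb.1, le_min ha.2 hb.2⟩
      · rw [dif_neg hj2, dif_neg hj2]
        exact h1 j hj1
    · rw [dif_neg hj1, dif_neg hj1]
      exact h2 j (by omega)

def cylSets : Set (Set (ℕ → ℝ)) := Set.range Cylinder.set

lemma isPiSystem_cylSets : IsPiSystem cylSets := by
  rintro s ⟨C1, rfl⟩ t ⟨C2, rfl⟩ -
  exact ⟨interCyl C1 C2, interCyl_set C1 C2⟩

/-- A single-coordinate rational closed-interval constraint is a countable union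
of cylinder sets. -/
lemma coord_Icc_mem (n : ℕ) (p q : ℚ) :
    MeasurableSet[MeasurableSpace.generateFrom cylSets]
      ((fun x : ℕ → ℝ => x n) ⁻¹' (Set.Icc (p:ℝ) (q:ℝ))) := by
  classical
  set cyl : ℕ → Cylinder := fun M =>
    { dim := n + 1
      dimPos := Nat.succ_pos n
      a := fun j => if j.val = n then p else -(M:ℚ)
      b := fun j => if j.val = n then q else (M:ℚ) } with hcyl
  have hset : (fun x : ℕ → ℝ => x n) ⁻¹' (Set.Icc (p:ℝ) (q:ℝ)) = ⋃ M : ℕ, (cyl M).set := by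
    ext x
    simp only [Set.mem_preimage, Set.mem_Icc, Set.mem_iUnion, Cylinder.mem_set_iff, hcyl,
      Fin.val_mk]
    constructor
    · rintro ⟨hp, hq⟩
      obtain ⟨M, hM⟩ := exists_nat_ge (∑ j ∈ Finset.range (n+1), |x j|)
      refine ⟨M, fun j hj => ?_⟩
      by_cases hjn : j = n
      · subst hjn
        simp only [if_pos rfl]
        exact ⟨hp, hq⟩
      · simp only [if_neg hjn]
        have hxj : |x j| ≤ (M:ℝ) :=
          le_trans (Finset.single_le_sum (f := fun i => |x i|)
            (fun i _ => abs_nonneg _) (Finset.mem_range.mpr hj)) hM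
        have habs := abs_le.mp hxj
        constructor
        · push_cast
          linarith [habs.1]
        · push_cast
          linarith [habs.2]
    · rintro ⟨M, hM⟩
      have := hM n (Nat.lt_succ_self n)
      simpa using this
  rw [hset]
  exact MeasurableSet.iUnion fun M =>
    MeasurableSpace.measurableSet_generateFrom ⟨cyl M, rfl⟩

lemma pi_eq_generateFrom_cylSets :
    (inferInstance : MeasurableSpace (ℕ → ℝ)) = .generateFrom cylSets := by
  apply le_antisymm
  · rw [show (inferInstance : MeasurableSpace (ℕ → ℝ)) = MeasurableSpace.pi from rfl,
      MeasurableSpace.pi]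
    apply iSup_le
    intro n
    set S : Set (Set ℝ) := ⋃ (a : ℚ), ⋃ (b : ℚ), ⋃ (_ : a < b), {Set.Ioo (a:ℝ) (b:ℝ)} with hS
    have hb : (inferInstance : MeasurableSpace ℝ) = MeasurableSpace.generateFrom S := by
      rw [BorelSpace.measurable_eq (α := ℝ), Real.borel_eq_generateFrom_Ioo_rat]
    calc MeasurableSpace.comap (fun x : ℕ → ℝ => x n) inferInstance
        = MeasurableSpace.comap (fun x : ℕ → ℝ => x n) (.generateFrom S) := by rw [← hb]
      _ = MeasurableSpace.generateFrom ((fun s => (fun x : ℕ → ℝ => x n) ⁻¹' s) '' S) :=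
          MeasurableSpace.comap_generateFrom
      _ ≤ MeasurableSpace.generateFrom cylSets := by
          apply MeasurableSpace.generateFrom_le
          rintro t ⟨s, hs, rfl⟩
          simp only [hS, Set.mem_iUnion, Set.mem_singleton_iff] at hs
          obtain ⟨a, b, hab, rfl⟩ := hs
          have hunion : (fun x : ℕ → ℝ => x n) ⁻¹' Set.Ioo (a:ℝ) (b:ℝ)
              = ⋃ k : ℕ, (fun x : ℕ → ℝ => x n) ⁻¹'
                  (Set.Icc ((a + 1/(k+1) : ℚ) : ℝ) ((b - 1/(k+1) : ℚ) : ℝ)) := by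
            ext x
            simp only [Set.mem_preimage, Set.mem_Ioo, Set.mem_iUnion, Set.mem_Icc]
            constructor
            · rintro ⟨h1, h2⟩
              have hε : (0:ℝ) < min (x n - a) (b - x n) := by
                apply lt_min <;> linarith
              obtain ⟨k, hk⟩ := exists_nat_one_div_lt hε
              have hk1 : (1:ℝ)/(k+1) < x n - a := lt_of_lt_of_le hk (min_le_left _ _)
              have hk2 : (1:ℝ)/(k+1) < b - x n := lt_of_lt_of_le hk (min_le_right _ _)
              refine ⟨k, ?_, ?_⟩ <;> push_cast <;> linarith
            · rintro ⟨k, h1, h2⟩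
              push_cast at h1 h2
              have : (0:ℝ) < 1/((k:ℝ)+1) := by positivity
              constructor <;> linarith
          show MeasurableSet[MeasurableSpace.generateFrom cylSets]
            ((fun x : ℕ → ℝ => x n) ⁻¹' Set.Ioo (a:ℝ) (b:ℝ))
          rw [hunion]
          exact MeasurableSet.iUnion fun k => coord_Icc_mem n _ _
  · apply MeasurableSpace.generateFrom_le
    rintro s ⟨C, rfl⟩
    exact C.measurableSet

/-- Two probability measures agreeing on all cylinders are equal. -/
lemma measure_eq_of_cylinders {μ ν : Measure (ℕ → ℝ)} [IsProbabilityMeasure μ]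
    [IsProbabilityMeasure ν] (h : ∀ C : Cylinder, μ C.set = ν C.set) : μ = ν := by
  apply MeasureTheory.ext_of_generate_finite cylSets pi_eq_generateFrom_cylSets
    isPiSystem_cylSets
  · rintro s ⟨C, rfl⟩
    exact h C
  · simp

end PiSystem

section Final
variable {ρ ρ' : Measure (ℕ → ℝ)} [IsProbabilityMeasure ρ] [IsProbabilityMeasure ρ']

lemma dd_self_eq_zero (w : ℕ → ℝ) (B : ℕ → Cylinder) : dd w B ρ ρ = 0 := by
  unfold dd
  simp

lemma dd_pos (w : ℕ → ℝ) (hw : ∀ i, 0 < w i) (hsum : Summable w)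
    (B : ℕ → Cylinder) (hB : Function.Surjective B) (hne : ρ' ≠ ρ) :
    0 < dd w B ρ' ρ := by
  -- find a cylinder where the measures differ
  have hC : ∃ C : Cylinder, ρ' C.set ≠ ρ C.set := by
    by_contra h
    push_neg at h
    exact hne (measure_eq_of_cylinders h)
  obtain ⟨C, hCne⟩ := hC
  obtain ⟨i, rfl⟩ := hB C
  have hterm : 0 < w i * |(ρ' (B i).set).toReal - (ρ (B i).set).toReal| := by
    apply mul_pos (hw i)
    rw [abs_pos, sub_ne_zero]
    intro h
    exact hCne ((ENNReal.toReal_eq_toReal_iff' (measure_ne_top ρ' _) (measure_ne_top ρ _)).mp h)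
  have hsummable : Summable (fun j => w j * |(ρ' (B j).set).toReal - (ρ (B j).set).toReal|) := by
    apply Summable.of_nonneg_of_le (fun j => mul_nonneg (hw j).le (abs_nonneg _))
      (fun j => ?_) hsum
    have h1 : |(ρ' (B j).set).toReal - (ρ (B j).set).toReal| ≤ 1 := by
      have := toReal_mem_unit (ρ := ρ') (B j).set
      have := toReal_mem_unit (ρ := ρ) (B j).set
      rw [abs_le]; constructor <;> [linarith [this.2]; linarith [this.1]]
    calc w j * |(ρ' (B j).set).toReal - (ρ (B j).set).toReal| ≤ w j * 1 :=
      mul_le_mul_of_nonneg_left h1 (hw j).le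
    _ = w j := mul_one _
  calc (0:ℝ) < w i * |(ρ' (B i).set).toReal - (ρ (B i).set).toReal| := hterm
  _ ≤ dd w B ρ' ρ :=
    Summable.le_tsum hsummable i fun j _ => mul_nonneg (hw j).le (abs_nonneg _)

/-- Under the null hypothesis the critical value is eventually below any `δ > 0`. -/
lemma crit_eventually_le (hρ : Ergodic shift ρ) (w : ℕ → ℝ) (hw : ∀ i, 0 < w i)
    (hsum : Summable w) (B : ℕ → Cylinder) {α : ℝ} (hα : α ∈ Set.Ioo (0:ℝ) 1)
    {δ : ℝ} (hδ : 0 < δ) :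
    ∀ᶠ n in atTop,
      sInf {δ' : ℝ | ρ {y | δ' ≤ dhat1 w B n y ρ} ≤ ENNReal.ofReal α} ≤ δ := by
  -- a.e. convergence to 0 under the null
  have hconv : ∀ᵐ X ∂ρ, Tendsto (fun n => dhat1 w B n X ρ) atTop (𝓝 0) := by
    have := tendsto_dhat1 (ρ := ρ) hρ w hw hsum B
    rwa [dd_self_eq_zero] at this
  have hmeas : TendstoInMeasure ρ (fun n X => dhat1 w B n X ρ) atTop (fun _ => 0) :=
    tendstoInMeasure_of_tendsto_ae
      (fun n => (measurable_dhat1 w hw hsum B n).aestronglyMeasurable) hconv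
  have htend := (tendstoInMeasure_iff_dist.mp hmeas) δ hδ
  have hsets : ∀ n, {x | δ ≤ dist (dhat1 w B n x ρ) 0} = {y | δ ≤ dhat1 w B n y ρ} := by
    intro n
    ext y
    rw [Set.mem_setOf_eq, Set.mem_setOf_eq, Real.dist_eq, sub_zero,
      abs_of_nonneg (dhat1_nonneg w hw B n y)]
  simp only [hsets] at htend
  have hev : ∀ᶠ n in atTop, ρ {y | δ ≤ dhat1 w B n y ρ} < ENNReal.ofReal α :=
    htend.eventually_lt_const (ENNReal.ofReal_pos.mpr hα.1)
  filter_upwards [hev] with n hn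
  have hbdd : BddBelow {δ' : ℝ | ρ {y | δ' ≤ dhat1 w B n y ρ} ≤ ENNReal.ofReal α} := by
    refine ⟨0, fun δ' hδ' => ?_⟩
    by_contra hneg
    push_neg at hneg
    have huniv : {y | δ' ≤ dhat1 w B n y ρ} = Set.univ := by
      ext y
      simp only [Set.mem_setOf_eq, Set.mem_univ, iff_true]
      exact le_trans hneg.le (dhat1_nonneg w hw B n y)
    rw [Set.mem_setOf_eq, huniv, measure_univ] at hδ'
    exact absurd (lt_of_le_of_lt hδ' (ENNReal.ofReal_lt_one.mpr hα.2)) (lt_irrefl _)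
  exact csInf_le hbdd hn.le

end Final


/-- The goodness-of-fit test is consistent: under any stationary ergodic
alternative `ρ' ≠ ρ`, almost surely the test rejects for all large `n`. -/
theorem stmt10 (w : ℕ → ℝ) (hw : ∀ i, 0 < w i) (hsum : Summable w)
    (B : ℕ → Cylinder) (hB : Function.Surjective B)
    (ρ ρ' : Measure (ℕ → ℝ)) [IsProbabilityMeasure ρ] [IsProbabilityMeasure ρ']
    (hρ : Ergodic shift ρ) (hρ' : Ergodic shift ρ') (hne : ρ' ≠ ρ)
    (α : ℝ) (hα : α ∈ Set.Ioo (0 : ℝ) 1) :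
    ∀ᵐ x ∂ρ', ∀ᶠ n in atTop,
      sInf {δ : ℝ | ρ {y | δ ≤ dhat1 w B n y ρ} ≤ ENNReal.ofReal α}
        ≤ dhat1 w B n x ρ := by
  have hD : 0 < dd w B ρ' ρ := dd_pos w hw hsum B hB hne
  have hcrit := crit_eventually_le hρ w hw hsum B hα (half_pos hD)
  have hconv : ∀ᵐ x ∂ρ', Tendsto (fun n => dhat1 w B n x ρ) atTop (𝓝 (dd w B ρ' ρ)) :=
    tendsto_dhat1 hρ' w hw hsum B
  filter_upwards [hconv] with x hx
  have h2 : ∀ᶠ n in atTop, dd w B ρ' ρ / 2 < dhat1 w B n x ρ :=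
    hx.eventually_const_lt (by linarith)
  filter_upwards [hcrit, h2] with n hn1 hn2
  linarith
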